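/- arXiv:2311.18766 — 5 statements merged into one kernel-verified Lean document; each statement's English description precedes it below -/
import Mathlib

section
/- Let F be a finite field of characteristic p and let P ∈ F[[X]] be a formal power series. If the p-kernel of the coefficient sequence of P, namely the set of functions { n ↦ coeff (p^k · n + r) P : k ∈ ℕ, 0 ≤ r < p^k } ⊆ (ℕ → F), is finite, then P is algebraic over F[X]. -/
open PowerSeries

section Aux

variable {F : Type*} [Field F]

lemma psCharP (p : ℕ) [Fact p.Prime] [CharP F p] : CharP (PowerSeries F) p :=
  charP_of_injective_ringHom (f := (C : F →+* PowerSeries F))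
    (fun a b h => by simpa using congrArg constantCoeff h) p

/-- Coefficients of the `p`-th power of a power series in characteristic `p`. -/
lemma coeff_pow_char' (p : ℕ) [Fact p.Prime] [CharP F p] (g : PowerSeries F) (n : ℕ) :
    coeff n (g ^ p) = if p ∣ n then (coeff (n / p) g) ^ p else 0 := by
  have hp : p.Prime := Fact.out
  set t : Polynomial F := trunc (n + 1) g with ht
  have hdvd : (X : PowerSeries F) ^ (n + 1) ∣ g ^ p - (t : PowerSeries F) ^ p := by
    refine dvd_trans ?_ (sub_dvd_pow_sub_pow g (t : PowerSeries F) p)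
    rw [PowerSeries.X_pow_dvd_iff]
    intro m hm
    rw [map_sub, Polynomial.coeff_coe, coeff_trunc, if_pos hm, sub_self]
  have hco : coeff n (g ^ p) = coeff n ((t : PowerSeries F) ^ p) := by
    have h0 := PowerSeries.X_pow_dvd_iff.mp hdvd n (Nat.lt_succ_self n)
    rw [map_sub, sub_eq_zero] at h0
    exact h0
  rw [hco, ← Polynomial.coe_pow, Polynomial.coeff_coe, ← Polynomial.map_frobenius_expand,
    Polynomial.coeff_map, Polynomial.coeff_expand hp.pos]
  split_ifs with h
  · rw [frobenius_def, coeff_trunc, if_pos (Nat.lt_succ_of_le (Nat.div_le_self n p))]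
  · rw [map_zero]

lemma coeff_pow_char_pow' (p : ℕ) [Fact p.Prime] [CharP F p] (g : PowerSeries F) (s : ℕ) :
    ∀ n, coeff n (g ^ p ^ s) = if p ^ s ∣ n then (coeff (n / p ^ s) g) ^ p ^ s else 0 := by
  have hp : p.Prime := Fact.out
  induction s with
  | zero => simp
  | succ s ih =>
    intro n
    have h1 : g ^ p ^ (s + 1) = (g ^ p ^ s) ^ p := by
      rw [← pow_mul, pow_succ]
    have hiff : p ^ (s + 1) ∣ n ↔ p ∣ n ∧ p ^ s ∣ n / p := by
      constructor
      · intro h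
        have hpn : p ∣ n := dvd_trans (dvd_pow_self p s.succ_ne_zero) h
        refine ⟨hpn, ?_⟩
        rw [Nat.dvd_div_iff_mul_dvd hpn, ← pow_succ']
        exact h
      · rintro ⟨hpn, hps⟩
        rw [Nat.dvd_div_iff_mul_dvd hpn, ← pow_succ'] at hps
        exact hps
    rw [h1, coeff_pow_char' p, ih]
    by_cases hpn : p ∣ n
    · by_cases hps : p ^ s ∣ n / p
      · rw [if_pos hpn, if_pos hps, if_pos (hiff.mpr ⟨hpn, hps⟩), ← pow_mul, ← pow_succ,
          Nat.div_div_eq_div_mul, ← pow_succ']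
      · rw [if_pos hpn, if_neg hps, if_neg, zero_pow hp.pos.ne']
        exact fun h => hps (hiff.mp h).2
    · rw [if_neg hpn, if_neg]
      exact fun h => hpn (hiff.mp h).1

variable [Fintype F]

/-- Coefficients of the `q^k`-th power, `q = |F|`. -/
lemma coeff_pow_card_pow (p : ℕ) [Fact p.Prime] [CharP F p] (g : PowerSeries F) (k n : ℕ) :
    coeff n (g ^ Fintype.card F ^ k) =
      if Fintype.card F ^ k ∣ n then coeff (n / Fintype.card F ^ k) g else 0 := by
  obtain ⟨s, _, hcard⟩ := FiniteField.card F p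
  have hq : Fintype.card F ^ k = p ^ ((s : ℕ) * k) := by rw [hcard, ← pow_mul]
  rw [hq, coeff_pow_char_pow' p]
  split_ifs with h
  · rw [← hq]
    exact FiniteField.pow_card_pow k _
  · rfl

/-- The Cartier / Frobenius decomposition of a power series over a finite field. -/
lemma mk_eq_sum_pow_card (p : ℕ) [Fact p.Prime] [CharP F p] (b : ℕ → F) :
    (mk b : PowerSeries F) = ∑ r ∈ Finset.range (Fintype.card F),
      X ^ r * (mk fun n => b (Fintype.card F * n + r)) ^ Fintype.card F := by
  set q := Fintype.card F with hq
  have hq0 : 0 < q := Fintype.card_pos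
  ext m
  rw [coeff_mk, map_sum, Finset.sum_eq_single (m % q)]
  · have h1 := coeff_pow_card_pow p (mk fun n => b (q * n + m % q)) 1 (m - m % q)
    rw [pow_one] at h1
    rw [coeff_X_pow_mul', if_pos (Nat.mod_le m q), h1, if_pos (Nat.dvd_sub_mod m), coeff_mk,
      Nat.mul_div_cancel' (Nat.dvd_sub_mod m), Nat.sub_add_cancel (Nat.mod_le m q)]
  · intro r hr hne
    rw [Finset.mem_range] at hr
    rw [coeff_X_pow_mul']
    split_ifs with hrm
    · have h1 := coeff_pow_card_pow p (mk fun n => b (q * n + r)) 1 (m - r)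
      rw [pow_one] at h1
      rw [h1, if_neg]
      rintro ⟨c, hc⟩
      apply hne
      have hm : m = q * c + r := by rw [hq]; omega
      rw [hm, Nat.mul_add_mod, Nat.mod_eq_of_lt hr]
    · rfl
  · intro h
    exact absurd (Finset.mem_range.mpr (Nat.mod_lt m hq0)) h

/-- Iterated decomposition. -/
lemma mk_pow_card_pow (p : ℕ) [Fact p.Prime] [CharP F p] (b : ℕ → F) (k : ℕ) :
    (mk b : PowerSeries F) ^ Fintype.card F ^ k = ∑ r ∈ Finset.range (Fintype.card F),
      X ^ (r * Fintype.card F ^ k) *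
        (mk fun n => b (Fintype.card F * n + r)) ^ Fintype.card F ^ (k + 1) := by
  haveI : CharP (PowerSeries F) p := psCharP p
  haveI : ExpChar (PowerSeries F) p := .prime Fact.out
  obtain ⟨s, _, hcard⟩ := FiniteField.card F p
  have hqk : Fintype.card F ^ k = p ^ ((s : ℕ) * k) := by rw [hcard, ← pow_mul]
  conv_lhs => rw [mk_eq_sum_pow_card p b, hqk, sum_pow_char_pow]
  refine Finset.sum_congr rfl fun r _ => ?_
  rw [← hqk, mul_pow, ← pow_mul, ← pow_mul, ← pow_succ']

end Aux

open scoped RatFunc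

/-- If the `p`-kernel of the coefficient sequence of `P ∈ F⟦X⟧` is finite
(`F` a finite field of characteristic `p`), then `P` is algebraic over `F[X]`. -/
theorem isAlgebraic_of_pKernel_finite (p : ℕ) [Fact p.Prime] (F : Type*) [Field F] [Fintype F]
    [CharP F p] (P : PowerSeries F)
    (hfin : Set.Finite {a : ℕ → F | ∃ k r : ℕ, r < p ^ k ∧
      a = fun n => PowerSeries.coeff (p ^ k * n + r) P}) :
    IsAlgebraic (Polynomial F) P := by
  classical
  obtain ⟨s, hps, hcard⟩ := FiniteField.card F p
  set q : ℕ := Fintype.card F with hqdef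
  have hq1 : 1 < q := Fintype.one_lt_card
  set a : ℕ → F := fun n => coeff n P with ha
  have hPa : P = mk a := by ext n; rw [coeff_mk]
  set S : Finset (ℕ → F) := hfin.toFinset with hS
  have haS : a ∈ S := by
    rw [hS, Set.Finite.mem_toFinset]
    exact ⟨0, 0, by norm_num, by funext n; simp [ha]⟩
  have hclosed : ∀ b ∈ S, ∀ r < q, (fun n => b (q * n + r)) ∈ S := by
    intro b hb r hr
    rw [hS, Set.Finite.mem_toFinset] at hb ⊢
    obtain ⟨k, r₀, hr₀, rfl⟩ := hb
    refine ⟨k + s, p ^ k * r + r₀, ?_, ?_⟩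
    · calc p ^ k * r + r₀ < p ^ k * r + p ^ k := by omega
        _ = p ^ k * (r + 1) := by ring
        _ ≤ p ^ k * p ^ (s : ℕ) := by
            refine Nat.mul_le_mul_left _ ?_
            rw [← hcard]; omega
        _ = p ^ (k + (s : ℕ)) := by rw [pow_add]
    · funext n
      have : p ^ k * (q * n + r) + r₀ = p ^ (k + (s : ℕ)) * n + (p ^ k * r + r₀) := by
        rw [pow_add, hcard]; ring
      simp only [this]
  -- move to Laurent series
  set L := LaurentSeries F
  set K := RatFunc F
  set ε : PowerSeries F →+* L := (HahnSeries.ofPowerSeries ℤ F : PowerSeries F →+* L) with hε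
  set w : (ℕ → F) → L := fun b => ε (mk b) with hw
  set W : ℕ → Submodule K L :=
    fun k => Submodule.span K ((fun b => w b ^ q ^ k) '' (S : Set (ℕ → F))) with hW
  have hXpow : ∀ m : ℕ, ε (X ^ m) =
      algebraMap K L (algebraMap (Polynomial F) K (Polynomial.X ^ m)) := by
    intro m
    rw [← IsScalarTower.algebraMap_apply, HahnSeries.algebraMap_apply']
    congr 1
    rw [map_pow]
    congr 1
    rw [PowerSeries.algebraMap_apply']
    simp
  have step1 : ∀ k, ∀ b ∈ S, w b ^ q ^ k ∈ W (k + 1) := by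
    intro k b hb
    have hdec := mk_pow_card_pow p b k
    have : w b ^ q ^ k = ∑ r ∈ Finset.range q,
        (algebraMap (Polynomial F) K (Polynomial.X ^ (r * q ^ k))) •
          (w (fun n => b (q * n + r)) ^ q ^ (k + 1)) := by
      rw [hw, ← map_pow, hdec, map_sum]
      refine Finset.sum_congr rfl fun r _ => ?_
      rw [map_mul, map_pow (ε) (mk fun n => b (q * n + r)), hXpow, Algebra.smul_def]
    rw [this]
    refine Submodule.sum_mem _ fun r hr => Submodule.smul_mem _ _ ?_
    refine Submodule.subset_span ?_
    exact ⟨fun n => b (q * n + r), hclosed b hb r (Finset.mem_range.mp hr), rfl⟩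
  have step2 : Monotone W := by
    refine monotone_nat_of_le_succ fun k => ?_
    rw [hW, Submodule.span_le]
    rintro x ⟨b, hb, rfl⟩
    exact step1 k b hb
  set d := S.card with hd
  have hvW : ∀ k : Fin (d + 1), w a ^ q ^ (k : ℕ) ∈ W d := by
    intro k
    refine step2 (Nat.le_of_lt_succ k.isLt) ?_
    exact Submodule.subset_span ⟨a, haS, rfl⟩
  haveI : FiniteDimensional K (W d) := by
    rw [hW]
    exact FiniteDimensional.span_of_finite K ((S : Set (ℕ → F)).toFinite.image _)
  have hrank : Module.finrank K (W d) ≤ d := by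
    refine le_trans (finrank_span_le_card _) ?_
    rw [Set.toFinset_image, Finset.toFinset_coe]
    exact Finset.card_image_le
  have notLI : ¬ LinearIndependent K (fun k : Fin (d + 1) => w a ^ q ^ (k : ℕ)) := by
    intro li
    have li' : LinearIndependent K (fun k : Fin (d + 1) =>
        (⟨w a ^ q ^ (k : ℕ), hvW k⟩ : W d)) := by
      refine LinearIndependent.of_comp (W d).subtype ?_
      exact li
    have := li'.fintype_card_le_finrank
    rw [Fintype.card_fin] at this
    omega
  obtain ⟨g, hgsum, i₀, hgi₀⟩ := Fintype.not_linearIndependent_iff.mp notLI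
  set Q : Polynomial K := ∑ i : Fin (d + 1), Polynomial.C (g i) * Polynomial.X ^ (q ^ (i : ℕ))
    with hQ
  have hQne : Q ≠ 0 := by
    intro h0
    apply hgi₀
    have := congrArg (fun Q => Polynomial.coeff Q (q ^ (i₀ : ℕ))) h0
    simp only [hQ, Polynomial.finset_sum_coeff, Polynomial.coeff_C_mul, Polynomial.coeff_X_pow,
      Polynomial.coeff_zero] at this
    rw [Finset.sum_eq_single i₀ (fun i _ hne => by
        rw [if_neg, mul_zero]
        exact fun h => hne (Fin.ext (Nat.pow_right_injective hq1 h.symm)))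
      (fun h => absurd (Finset.mem_univ i₀) h)] at this
    simpa using this
  have hev : Polynomial.aeval (ε P) Q = 0 := by
    rw [hQ, map_sum, ← hgsum]
    refine Finset.sum_congr rfl fun i _ => ?_
    rw [map_mul, Polynomial.aeval_C, map_pow, Polynomial.aeval_X, Algebra.smul_def, hPa]
  have halgK : IsAlgebraic K (ε P) := ⟨Q, hQne, hev⟩
  have halgFX : IsAlgebraic (Polynomial F) (ε P) :=
    (IsFractionRing.isAlgebraic_iff (Polynomial F) K L).mpr halgK
  obtain ⟨Q', hQ'ne, hQ'ev⟩ := halgFX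
  refine ⟨Q', hQ'ne, ?_⟩
  have hcomm : ε (Polynomial.aeval P Q') = Polynomial.aeval (ε P) Q' := by
    rw [Polynomial.aeval_eq_sum_range (R := Polynomial F) (x := P),
      Polynomial.aeval_eq_sum_range (R := Polynomial F) (x := ε P), map_sum]
    refine Finset.sum_congr rfl fun i _ => ?_
    rw [Algebra.smul_def, Algebra.smul_def, map_mul, map_pow, HahnSeries.algebraMap_apply']
  have : ε (Polynomial.aeval P Q') = 0 := by rw [hcomm, hQ'ev]
  have hinj : Function.Injective ε := HahnSeries.ofPowerSeries_injective
  rw [← map_zero ε] at this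
  exact hinj this
end

section
/- Let F be a finite field (or any finite type) and p ≥ 2 a natural number. A sequence a : ℕ → F is p-automatic (there exist a finite type σ, δ : σ → Fin p → σ, s₀ : σ, and o : σ → F with a(n) = o(List.foldl δ s₀ (Nat.digits p n)) for all n) if and only if its p-kernel, the set of functions { n ↦ a(p^k · n + r) : k ∈ ℕ, 0 ≤ r < p^k } ⊆ (ℕ → F), is finite. -/
section Aux

variable (p : ℕ) (hp : 2 ≤ p) {F : Type*} [Fintype F] (a : ℕ → F)

/-- length of digits bound -/
lemma digits_len_le_of_lt_pow {p k r : ℕ} (hp : 2 ≤ p) (hr : r < p ^ k) :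
    (Nat.digits p r).length ≤ k := by
  rcases Nat.eq_zero_or_pos r with rfl | hr0
  · simp
  have h1 : p ^ (Nat.digits p r).length ≤ p * r :=
    Nat.base_pow_length_digits_le p r (by omega) (by omega)
  have h2 : p * r < p * p ^ k := by nlinarith
  have h3 : p ^ (Nat.digits p r).length < p ^ (k + 1) := by
    calc p ^ (Nat.digits p r).length ≤ p * r := h1
      _ < p * p ^ k := h2
      _ = p ^ (k + 1) := by ring
  have := (Nat.pow_lt_pow_iff_right (by omega : 1 < p)).mp h3
  omega

end Aux

/-- A sequence with values in a finite type is `p`-automatic if and only if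
its `p`-kernel is finite. -/
theorem automatic_iff_pKernel_finite (p : ℕ) (hp : 2 ≤ p) (F : Type*) [Fintype F]
    (a : ℕ → F) :
    (∃ (σ : Type) (_ : Fintype σ) (δ : σ → Fin p → σ) (s₀ : σ) (o : σ → F),
        ∀ n : ℕ,
          a n = o (List.foldl δ s₀
            ((Nat.digits p n).map (fun d => (⟨d % p, Nat.mod_lt d (by omega)⟩ : Fin p))))) ↔
      Set.Finite {b : ℕ → F | ∃ k r : ℕ, r < p ^ k ∧ b = fun n => a (p ^ k * n + r)} := by
  have hp1 : 1 < p := by omega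
  have hp0 : 0 < p := by omega
  set emb : ℕ → Fin p := fun d => (⟨d % p, Nat.mod_lt d (by omega)⟩ : Fin p) with hemb
  constructor
  · rintro ⟨σ, inst, δ, s₀, o, h⟩
    -- each kernel element is determined by a state and a value at 0
    set g : σ × F → (ℕ → F) := fun sf n =>
      if n = 0 then sf.2 else o (List.foldl δ sf.1 ((Nat.digits p n).map emb)) with hg
    apply Set.Finite.subset (Set.finite_range g)
    rintro b ⟨k, r, hr, rfl⟩
    set L : List ℕ := Nat.digits p r ++ List.replicate (k - (Nat.digits p r).length) 0 with hL
    refine ⟨(List.foldl δ s₀ (L.map emb), a r), ?_⟩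
    funext n
    rcases Nat.eq_zero_or_pos n with rfl | hn
    · simp [hg]
    · have hlen : (Nat.digits p r).length ≤ k := digits_len_le_of_lt_pow hp hr
      have hdig : Nat.digits p (p ^ k * n + r) = L ++ Nat.digits p n := by
        have := Nat.digits_append_zeroes_append_digits (b := p)
          (k := k - (Nat.digits p r).length) (m := n) (n := r) hp1 hn
        rw [hL, this]
        congr 1
        have : (Nat.digits p r).length + (k - (Nat.digits p r).length) = k := by omega
        rw [this]; ring
      have hne : n ≠ 0 := by omega
      simp only [hg, if_neg hne]
      rw [h (p ^ k * n + r), hdig, hL]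
      simp [List.foldl_append]
  · intro hfin
    set S : Set (ℕ → F) := {b : ℕ → F | ∃ k r : ℕ, r < p ^ k ∧ b = fun n => a (p ^ k * n + r)}
      with hS
    haveI : Fintype S := hfin.fintype
    -- transport to Fin m so that σ : Type
    obtain ⟨m, e⟩ : ∃ m, Nonempty (S ≃ Fin m) := ⟨Fintype.card S, ⟨Fintype.equivFin S⟩⟩
    obtain ⟨e⟩ := e
    have haS : a ∈ S := ⟨0, 0, by norm_num, by funext n; simp⟩
    -- the step function on the kernel
    have hstep : ∀ b ∈ S, ∀ d : Fin p, (fun n => b (p * n + d.val)) ∈ S := by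
      rintro b ⟨k, r, hr, rfl⟩ d
      refine ⟨k + 1, p ^ k * d.val + r, ?_, ?_⟩
      · have : p ^ k * d.val + r < p ^ k * d.val + p ^ k := by omega
        have h2 : p ^ k * d.val + p ^ k = p ^ k * (d.val + 1) := by ring
        have h3 : p ^ k * (d.val + 1) ≤ p ^ k * p := by
          apply Nat.mul_le_mul_left
          exact d.isLt
        calc p ^ k * d.val + r < p ^ k * (d.val + 1) := by omega
          _ ≤ p ^ k * p := h3
          _ = p ^ (k + 1) := by ring
      · funext n; congr 1; ring
    set step : S → Fin p → S := fun b d => ⟨fun n => b.val (p * n + d.val), hstep b.val b.2 d⟩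
      with hstepdef
    refine ⟨Fin m, inferInstance, fun s d => e (step (e.symm s) d), e ⟨a, haS⟩,
      fun s => (e.symm s).val 0, fun n => ?_⟩
    -- key invariant of the fold
    have key : ∀ (L : List (Fin p)) (b : S) (j : ℕ),
        (List.foldl step b L).val j = b.val (Nat.ofDigits p (L.map Fin.val) + p ^ L.length * j) := by
      intro L
      induction L with
      | nil => intro b j; simp
      | cons d L ih =>
        intro b j
        simp only [List.foldl_cons, ih]
        show b.val (p * (Nat.ofDigits p (L.map Fin.val) + p ^ L.length * j) + d.val) = _
        congr 1
        simp only [List.map_cons, Nat.ofDigits_cons, List.length_cons]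
        push_cast
        ring
    have hfold : ∀ (L : List (Fin p)) (b : S),
        List.foldl (fun s d => e (step (e.symm s) d)) (e b) L = e (List.foldl step b L) := by
      intro L
      induction L with
      | nil => intro b; rfl
      | cons d L ih => intro b; simp only [List.foldl_cons, Equiv.symm_apply_apply, ih]
    have hmap : ((Nat.digits p n).map emb).map Fin.val = Nat.digits p n := by
      rw [List.map_map]
      conv_rhs => rw [← List.map_id (Nat.digits p n)]
      apply List.map_congr_left
      intro d hd
      simp [hemb, Nat.mod_eq_of_lt (Nat.digits_lt_base hp1 hd)]
    rw [hfold]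
    simp only [Equiv.symm_apply_apply]
    rw [key ((Nat.digits p n).map emb) ⟨a, haS⟩ 0, hmap]
    simp [Nat.ofDigits_digits]
end

section
/- Let F be a field of characteristic p with p prime, and let P ∈ F[[X]]. For every natural number m, the m-th coefficient of the (p−1)-fold iterated formal derivative of P equals −coeff (m + p − 1) P if p divides m, and equals 0 otherwise. That is, coeff m (derivative^[p−1] P) = if p ∣ m then −(coeff (m + p − 1) P) else 0. -/
open PowerSeries hiding coeff_iterate_derivative

lemma coeff_iter_deriv_aux (F : Type*) [Field F] (P : PowerSeries F) (k : ℕ) :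
    ∀ m : ℕ, PowerSeries.coeff m ((⇑(PowerSeries.derivative F))^[k] P) =
      (∏ i ∈ Finset.range k, ((m + i + 1 : ℕ) : F)) * PowerSeries.coeff (m + k) P := by
  induction k with
  | zero => simp
  | succ k ih =>
    intro m
    rw [Function.iterate_succ_apply', PowerSeries.coeff_derivative, ih (m + 1),
      Finset.prod_range_succ']
    have h1 : m + 1 + k = m + (k + 1) := by omega
    have h2 : ∀ i, m + 1 + i + 1 = m + (i + 1) + 1 := by omega
    simp only [h1]
    rw [Finset.prod_congr rfl (fun i _ => by rw [h2 i])]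
    push_cast
    ring

/-- Over a field of characteristic `p`, the `m`-th coefficient of the `(p-1)`-fold
iterated formal derivative of `P` is `-coeff (m + p - 1) P` if `p ∣ m`, and `0`
otherwise (using Wilson's congruence `(p-1)! ≡ -1 (mod p)`). -/
theorem coeff_iterate_derivative (p : ℕ) [Fact p.Prime] (F : Type*) [Field F] [CharP F p]
    (P : PowerSeries F) (m : ℕ) :
    PowerSeries.coeff m ((⇑(PowerSeries.derivative F))^[p - 1] P) =
      if p ∣ m then -(PowerSeries.coeff (m + p - 1) P) else 0 := by
  have hp : p.Prime := Fact.out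
  have hp2 : 2 ≤ p := hp.two_le
  rw [coeff_iter_deriv_aux, show m + (p - 1) = m + p - 1 by omega]
  by_cases hdvd : p ∣ m
  · rw [if_pos hdvd]
    have hm : (m : F) = 0 := (CharP.cast_eq_zero_iff F p m).2 hdvd
    have hprod : (∏ i ∈ Finset.range (p - 1), ((m + i + 1 : ℕ) : F)) =
        ∏ i ∈ Finset.range (p - 1), ((i + 1 : ℕ) : F) := by
      refine Finset.prod_congr rfl fun i _ => ?_
      push_cast
      rw [hm, zero_add]
    rw [hprod]
    have hfac : (∏ i ∈ Finset.range (p - 1), ((i + 1 : ℕ) : F)) =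
        ((Nat.factorial (p - 1) : ℕ) : F) := by
      rw [← Nat.cast_prod, Finset.prod_range_add_one_eq_factorial]
    rw [hfac]
    have hw : ((Nat.factorial (p - 1) : ℕ) : F) = -1 := by
      have hw : ((Nat.factorial (p - 1) : ℕ) : ZMod p) = -1 := ZMod.wilsons_lemma p
      have h2 := congrArg (ZMod.castHom (dvd_refl p) F) hw
      rw [map_natCast, map_neg, map_one] at h2
      exact h2
    rw [hw]
    ring
  · rw [if_neg hdvd]
    have hi : p - m % p - 1 ∈ Finset.range (p - 1) := by
      have h1 : m % p ≠ 0 := fun h => hdvd (Nat.dvd_of_mod_eq_zero h)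
      have h2 : m % p < p := Nat.mod_lt _ (by omega)
      simp only [Finset.mem_range]
      omega
    rw [Finset.prod_eq_zero hi, zero_mul]
    rw [CharP.cast_eq_zero_iff F p]
    have h1 : m % p ≠ 0 := fun h => hdvd (Nat.dvd_of_mod_eq_zero h)
    have h2 : m % p < p := Nat.mod_lt _ (by omega)
    obtain ⟨q, hq⟩ : ∃ q, m = p * q + m % p := ⟨m / p, (Nat.div_add_mod m p).symm⟩
    have : m + (p - m % p - 1) + 1 = p * q + p := by omega
    rw [this]
    exact Dvd.dvd.add (Dvd.intro q rfl) (dvd_refl p)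
end

section
/- Let F be a finite field of characteristic p and let P ∈ F[[X]] be algebraic over F[X] (via the natural algebra map F[X] → F[[X]]). Then the formal derivative of P is also algebraic over F[X]. -/
open PowerSeries
open scoped RatFunc

set_option synthInstance.maxHeartbeats 1000000
set_option maxHeartbeats 1600000
section Aux

variable {p : ℕ} [Fact p.Prime] {F : Type*} [Field F] [CharP F p]

lemma polyCoeffPowChar (f : Polynomial F) (n : ℕ) :
    (f ^ p).coeff n = if p ∣ n then (f.coeff (n / p)) ^ p else 0 := by
  rw [← Polynomial.map_frobenius_expand (p := p) (f := f), Polynomial.coeff_map,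
    Polynomial.coeff_expand (Fact.out : p.Prime).pos]
  split_ifs <;> simp [frobenius_def, (Fact.out : p.Prime).ne_zero]

lemma psCoeffPowChar (f : PowerSeries F) (n : ℕ) :
    PowerSeries.coeff n (f ^ p) = if p ∣ n then (PowerSeries.coeff (n / p) f) ^ p else 0 := by
  have h := PowerSeries.trunc_trunc_pow f (n + 1) p
  have h1 : PowerSeries.coeff n (f ^ p)
      = (PowerSeries.trunc (n + 1) (f ^ p)).coeff n := by
    rw [PowerSeries.coeff_trunc, if_pos (Nat.lt_succ_self n)]
  rw [h1, ← h, PowerSeries.coeff_trunc, if_pos (Nat.lt_succ_self n), ← Polynomial.coe_pow,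
    Polynomial.coeff_coe, polyCoeffPowChar]
  have hd : n / p < n + 1 := Nat.lt_succ_of_le (Nat.div_le_self n p)
  split_ifs with hdvd
  · rw [PowerSeries.coeff_trunc, if_pos hd]
  · rfl

omit [Fact p.Prime] [Field F] [CharP F p] in
lemma modAux {s t n : ℕ} (hs : s < p) (ht : t < p) (hne : t ≠ s) (hle : t ≤ p * n + s) :
    ¬ p ∣ (p * n + s - t) := by
  intro ⟨u, hu⟩
  have h1 : p * u + t = p * n + s := by omega
  have h2 : (p * u + t) % p = (p * n + s) % p := by rw [h1]
  rw [Nat.mul_add_mod, Nat.mul_add_mod, Nat.mod_eq_of_lt hs, Nat.mod_eq_of_lt ht] at h2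
  exact hne h2

lemma indepAux (g : ℕ → PowerSeries F)
    (h : ∑ s ∈ Finset.range p, (PowerSeries.X : PowerSeries F) ^ s * (g s) ^ p = 0) :
    ∀ s < p, g s = 0 := by
  intro s hs
  ext n
  have h0 := congrArg (PowerSeries.coeff (p * n + s)) h
  rw [map_sum, map_zero] at h0
  rw [Finset.sum_eq_single s] at h0
  · rw [PowerSeries.coeff_X_pow_mul', if_pos (Nat.le_add_left s (p * n))] at h0
    have : p * n + s - s = p * n := by omega
    rw [this, psCoeffPowChar, if_pos ⟨n, rfl⟩,
      Nat.mul_div_cancel_left n (Fact.out : p.Prime).pos] at h0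
    simpa using pow_eq_zero_iff (Fact.out : p.Prime).ne_zero |>.mp h0
  · intro t hts htne
    rw [PowerSeries.coeff_X_pow_mul']
    split_ifs with hle
    · rw [psCoeffPowChar, if_neg (modAux hs (Finset.mem_range.mp hts) htne hle)]
    · rfl
  · intro hsn
    exact absurd (Finset.mem_range.mpr hs) hsn

variable [Fintype F]

omit [Fact p.Prime] [CharP F p] [Fintype F] in
lemma instCharPPoly [CharP F p] : CharP (Polynomial F) p :=
  charP_of_injective_ringHom (Polynomial.C_injective (R := F)) p

lemma decompPoly (a : Polynomial F) : ∃ b : ℕ → Polynomial F,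
    a = ∑ s ∈ Finset.range p, (Polynomial.X : Polynomial F) ^ s * (b s) ^ p := by
  haveI := instCharPPoly (p := p) (F := F)
  induction a using Polynomial.induction_on' with
  | add f g hf hg =>
    obtain ⟨b1, hb1⟩ := hf
    obtain ⟨b2, hb2⟩ := hg
    refine ⟨fun s => b1 s + b2 s, ?_⟩
    rw [hb1, hb2, ← Finset.sum_add_distrib]
    refine Finset.sum_congr rfl fun s _ => ?_
    rw [add_pow_char, mul_add]
  | monomial n c =>
    refine ⟨fun s => if s = n % p then
        Polynomial.C ((frobeniusEquiv F p).symm c) * Polynomial.X ^ (n / p) else 0, ?_⟩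
    dsimp only
    rw [Finset.sum_eq_single (n % p)]
    · rw [if_pos rfl, mul_pow, ← map_pow, frobeniusEquiv_symm_pow_p, ← pow_mul, mul_left_comm,
        ← pow_add, Nat.mod_add_div' n p, Polynomial.C_mul_X_pow_eq_monomial]
    · intro t _ htne
      rw [if_neg htne, zero_pow (Fact.out : p.Prime).ne_zero, mul_zero]
    · intro hn
      exact absurd (Finset.mem_range.mpr (Nat.mod_lt n (Fact.out : p.Prime).pos)) hn

omit [Fact p.Prime] [CharP F p] [Fintype F] in
lemma coeSumAux (b : ℕ → Polynomial F) :
    ((∑ s ∈ Finset.range p, (Polynomial.X : Polynomial F) ^ s * (b s) ^ p : Polynomial F) :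
      PowerSeries F)
    = ∑ s ∈ Finset.range p, (PowerSeries.X : PowerSeries F) ^ s * ((b s : PowerSeries F)) ^ p := by
  rw [← Polynomial.coeToPowerSeries.ringHom_apply, map_sum]
  refine Finset.sum_congr rfl fun s _ => ?_
  rw [map_mul, map_pow, map_pow, Polynomial.coeToPowerSeries.ringHom_apply,
    Polynomial.coeToPowerSeries.ringHom_apply, Polynomial.coe_X]

omit [Fintype F] in
lemma decompUnique (b : ℕ → Polynomial F)
    (h : ∑ s ∈ Finset.range p, (Polynomial.X : Polynomial F) ^ s * (b s) ^ p = 0) :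
    ∀ s < p, b s = 0 := by
  intro s hs
  have h2 : ∑ s ∈ Finset.range p, (PowerSeries.X : PowerSeries F) ^ s
      * ((b s : PowerSeries F)) ^ p = 0 := by
    rw [← coeSumAux, h, Polynomial.coe_zero]
  have := indepAux (fun s => (b s : PowerSeries F)) h2 s hs
  exact Polynomial.coe_eq_zero_iff.mp this

lemma descent (P : PowerSeries F) : ∀ (k m : ℕ) (a : ℕ → Polynomial F), k ≤ m → a k ≠ 0 →
    (∀ i < k, a i = 0) →
    (∑ i ∈ Finset.range (m + 1), (a i : PowerSeries F) * P ^ p ^ i = 0) →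
    ∃ (m' : ℕ) (a' : ℕ → Polynomial F), a' 0 ≠ 0 ∧
      ∑ i ∈ Finset.range (m' + 1), (a' i : PowerSeries F) * P ^ p ^ i = 0 := by
  haveI hps : CharP (PowerSeries F) p := charP_of_injective_algebraMap' F (A := PowerSeries F) p
  intro k
  induction k with
  | zero => exact fun m a _ h0 _ hrel => ⟨m, a, h0, hrel⟩
  | succ k ih =>
    intro m a hkm hak ha0 hrel
    choose b hb using fun i => decompPoly (p := p) (a i)
    have hbz : ∀ i < k + 1, ∀ s < p, b i s = 0 := by
      intro i hi s hs
      refine decompUnique (b i) ?_ s hs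
      rw [← hb i, ha0 i hi]
    -- the components
    set g : ℕ → PowerSeries F :=
      fun s => ∑ i ∈ Finset.range (m + 1), (b i s : PowerSeries F) * P ^ p ^ (i - 1) with hg
    have hgsum : ∑ s ∈ Finset.range p, (PowerSeries.X : PowerSeries F) ^ s * (g s) ^ p = 0 := by
      have step : ∀ s, (g s) ^ p
          = ∑ i ∈ Finset.range (m + 1), (b i s : PowerSeries F) ^ p * (P ^ p ^ (i - 1)) ^ p := by
        intro s
        rw [hg]
        rw [sum_pow_char]
        exact Finset.sum_congr rfl fun i _ => by rw [mul_pow]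
      calc ∑ s ∈ Finset.range p, (PowerSeries.X : PowerSeries F) ^ s * (g s) ^ p
          = ∑ i ∈ Finset.range (m + 1),
              (∑ s ∈ Finset.range p, (PowerSeries.X : PowerSeries F) ^ s
                * (b i s : PowerSeries F) ^ p) * (P ^ p ^ (i - 1)) ^ p := by
            simp_rw [step, Finset.mul_sum, Finset.sum_mul]
            rw [Finset.sum_comm]
            exact Finset.sum_congr rfl fun i _ => Finset.sum_congr rfl fun s _ => by ring
        _ = ∑ i ∈ Finset.range (m + 1), (a i : PowerSeries F) * (P ^ p ^ (i - 1)) ^ p := by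
            refine Finset.sum_congr rfl fun i _ => ?_
            congr 1
            rw [hb i, coeSumAux]
        _ = ∑ i ∈ Finset.range (m + 1), (a i : PowerSeries F) * P ^ p ^ i := by
            refine Finset.sum_congr rfl fun i _ => ?_
            rcases Nat.eq_zero_or_pos i with hi | hi
            · rw [hi, ha0 0 (Nat.succ_pos k)]
              simp
            · rw [← pow_mul, ← pow_succ, Nat.sub_add_cancel hi]
        _ = 0 := hrel
    have hgz := indepAux g hgsum
    -- pick s with b (k+1) s ≠ 0
    have hbs : ∃ s, s < p ∧ b (k + 1) s ≠ 0 := by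
      by_contra hcon
      push_neg at hcon
      apply hak
      rw [hb (k + 1), Finset.sum_eq_zero]
      intro s hsm
      rw [hcon s (Finset.mem_range.mp hsm), zero_pow (Fact.out : p.Prime).ne_zero, mul_zero]
    obtain ⟨s, hsp, hbks⟩ := hbs
    -- new relation
    have hgs := hgz s hsp
    rw [hg] at hgs
    dsimp only at hgs
    rw [Finset.sum_range_succ'] at hgs
    have hm1 : m - 1 + 1 = m := Nat.succ_pred_eq_of_pos (lt_of_lt_of_le (Nat.succ_pos k) hkm)
    have hrel' : ∑ i ∈ Finset.range (m - 1 + 1), (b (i + 1) s : PowerSeries F) * P ^ p ^ i = 0 := by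
      rw [hm1]
      have h0term : ((b 0 s : PowerSeries F)) * P ^ p ^ (0 - 1) = 0 := by
        rw [hbz 0 (Nat.succ_pos k) s hsp]
        simp
      rw [h0term, add_zero] at hgs
      rw [← hgs]
      exact Finset.sum_congr rfl fun i _ => by norm_num
    exact ih (m - 1) (fun i => b (i + 1) s) (by omega) hbks
      (fun i hi => hbz (i + 1) (by omega) s hsp) hrel'

open LaurentSeries in
noncomputable def psToLaurent : PowerSeries F →ₐ[Polynomial F] LaurentSeries F :=
  { (HahnSeries.ofPowerSeries ℤ F : PowerSeries F →+* LaurentSeries F) with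
    commutes' := fun r => rfl }

lemma psToLaurent_injective :
    Function.Injective (psToLaurent (F := F)) :=
  HahnSeries.ofPowerSeries_injective

lemma psToLaurent_coe (a : Polynomial F) :
    psToLaurent ((a : PowerSeries F)) = algebraMap (Polynomial F) (LaurentSeries F) a := rfl

lemma exists_rel (P : PowerSeries F) (hP : IsAlgebraic (Polynomial F) P) :
    ∃ (m : ℕ) (a : ℕ → Polynomial F) (k : ℕ), k ≤ m ∧ a k ≠ 0 ∧
      ∑ i ∈ Finset.range (m + 1), (a i : PowerSeries F) * P ^ p ^ i = 0 := by
  classical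
  set φ := (psToLaurent (F := F))
  set x := φ P with hx
  have hφinj : Function.Injective φ := psToLaurent_injective
  have hPL : IsAlgebraic (Polynomial F) x := (isAlgebraic_algHom_iff φ hφinj).mpr hP
  have hK : IsAlgebraic (RatFunc F) x :=
    (IsFractionRing.isAlgebraic_iff (Polynomial F) (RatFunc F) (LaurentSeries F)).mp hPL
  obtain ⟨f, hfmonic, hf0⟩ := hK.isIntegral
  set n := f.natDegree with hn
  set r : Fin (n + 1) → Polynomial (RatFunc F) :=
    fun i => Polynomial.X ^ p ^ (i : ℕ) %ₘ f with hr
  have hrmem : ∀ i, r i ∈ Polynomial.degreeLT (RatFunc F) n := by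
    intro i
    rw [Polynomial.mem_degreeLT]
    have := Polynomial.degree_modByMonic_lt (Polynomial.X ^ p ^ (i : ℕ)) hfmonic
    rwa [Polynomial.degree_eq_natDegree hfmonic.ne_zero] at this
  set u : Fin (n + 1) → Polynomial.degreeLT (RatFunc F) n := fun i => ⟨r i, hrmem i⟩ with hu
  have hdep : ¬ LinearIndependent (RatFunc F)
      (fun i => Polynomial.degreeLTEquiv (RatFunc F) n (u i)) := by
    intro hli
    have := hli.fintype_card_le_finrank
    rw [Fintype.card_fin, Module.finrank_pi, Fintype.card_fin] at this
    omega
  rw [Fintype.not_linearIndependent_iff] at hdep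
  obtain ⟨c, hc, j, hj⟩ := hdep
  have hcu : ∑ i : Fin (n + 1), c i • u i = 0 := by
    apply (Polynomial.degreeLTEquiv (RatFunc F) n).injective
    rw [map_sum, map_zero]
    simpa only [map_smul] using hc
  have hcr : ∑ i : Fin (n + 1), c i • r i = 0 := by
    have := congrArg (Subtype.val) hcu
    simpa using this
  have hpow : ∀ i : Fin (n + 1), Polynomial.aeval x (r i) = x ^ p ^ (i : ℕ) := by
    intro i
    have h := congrArg (Polynomial.aeval x)
      (Polynomial.modByMonic_add_div (Polynomial.X ^ p ^ (i : ℕ)) f)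
    rw [map_add, map_mul, map_pow, Polynomial.aeval_X] at h
    have hf0' : Polynomial.aeval x f = 0 := hf0
    rw [hf0', zero_mul, add_zero] at h
    exact h
  have hcL : ∑ i : Fin (n + 1), c i • x ^ p ^ (i : ℕ) = 0 := by
    have := congrArg (Polynomial.aeval x) hcr
    rw [map_sum, map_zero] at this
    simpa only [map_smul, hpow] using this
  -- clear denominators
  obtain ⟨q, hq⟩ := IsLocalization.exist_integer_multiples
    (nonZeroDivisors (Polynomial F)) Finset.univ c
  choose A hA using hq
  set a : Fin (n + 1) → Polynomial F := fun i => A i (Finset.mem_univ i) with ha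
  have haK : ∀ i, algebraMap (Polynomial F) (RatFunc F) (a i) = (q : Polynomial F) • c i :=
    fun i => hA i (Finset.mem_univ i)
  have hrel : ∑ i : Fin (n + 1),
      algebraMap (Polynomial F) (LaurentSeries F) (a i) * x ^ p ^ (i : ℕ) = 0 := by
    have hterm : ∀ i : Fin (n + 1),
        algebraMap (Polynomial F) (LaurentSeries F) (a i) * x ^ p ^ (i : ℕ)
        = algebraMap (RatFunc F) (LaurentSeries F)
            (algebraMap (Polynomial F) (RatFunc F) (q : Polynomial F))
          * (c i • x ^ p ^ (i : ℕ)) := by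
      intro i
      rw [IsScalarTower.algebraMap_apply (Polynomial F) (RatFunc F) (LaurentSeries F), haK i,
        Algebra.smul_def, Algebra.smul_def, map_mul, mul_assoc]
    simp_rw [hterm, ← Finset.mul_sum, hcL, mul_zero]
  -- pull back to power series
  have hrelPS : ∑ i : Fin (n + 1), (a i : PowerSeries F) * P ^ p ^ (i : ℕ) = 0 := by
    apply hφinj
    rw [map_sum, map_zero]
    rw [Finset.sum_congr rfl fun i _ => by rw [map_mul, map_pow, psToLaurent_coe]]
    exact hrel
  refine ⟨n, fun i => if h : i < n + 1 then a ⟨i, h⟩ else 0, (j : ℕ),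
    Nat.lt_succ_iff.mp j.isLt, ?_, ?_⟩
  · dsimp only
    rw [dif_pos j.isLt]
    intro h0
    apply hj
    have hth := haK ⟨j, j.isLt⟩
    rw [Fin.eta, h0, map_zero] at hth
    have hqne : algebraMap (Polynomial F) (RatFunc F) (q : Polynomial F) ≠ 0 := by
      simpa using nonZeroDivisors.coe_ne_zero q
    rw [Algebra.smul_def] at hth
    rcases mul_eq_zero.mp hth.symm with h | h
    · exact absurd h hqne
    · exact h
  · rw [Finset.sum_range fun i => _]
    rw [← hrelPS]
    refine Finset.sum_congr rfl fun i _ => ?_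
    dsimp only
    rw [dif_pos i.isLt]

end Aux

/-- Over a finite field of characteristic `p`, the formal derivative of a power series
algebraic over `F[X]` is again algebraic over `F[X]`. -/
theorem isAlgebraic_derivative (p : ℕ) [Fact p.Prime] (F : Type*) [Field F] [Fintype F]
    [CharP F p] (P : PowerSeries F) (hP : IsAlgebraic (Polynomial F) P) :
    IsAlgebraic (Polynomial F) (PowerSeries.derivative F P) := by
  classical
  haveI hps : CharP (PowerSeries F) p := charP_of_injective_algebraMap' F (A := PowerSeries F) p
  obtain ⟨m0, a0, k, hkm, hak, hrel0⟩ := exists_rel (p := p) P hP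
  have hex : ∃ i, a0 i ≠ 0 := ⟨k, hak⟩
  have hk'm : Nat.find hex ≤ m0 := le_trans (Nat.find_le hak) hkm
  obtain ⟨m, a, ha0, hrel⟩ := descent (p := p) P (Nat.find hex) m0 a0 hk'm (Nat.find_spec hex)
    (fun i hi => not_not.mp (Nat.find_min hex hi)) hrel0
  set D := PowerSeries.derivative F with hD
  have hterm : ∀ i ∈ Finset.range (m + 1), D ((a i : PowerSeries F) * P ^ p ^ i)
      = ((Polynomial.derivative (a i) : Polynomial F) : PowerSeries F) * P ^ p ^ i
        + (if i = 0 then (a 0 : PowerSeries F) * D P else 0) := by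
    intro i _
    rw [Derivation.leibniz, PowerSeries.derivative_coe, smul_eq_mul, smul_eq_mul]
    rcases eq_or_ne i 0 with rfl | hi
    · rw [if_pos rfl, pow_zero, pow_one]
      ring
    · rw [if_neg hi, Derivation.leibniz_pow]
      have hz : (p ^ i) • (P ^ (p ^ i - 1) • D P) = (0 : PowerSeries F) := by
        rw [nsmul_eq_mul, Nat.cast_pow, CharP.cast_eq_zero (PowerSeries F) p,
          zero_pow hi, zero_mul]
      rw [hz, mul_zero, zero_add, add_zero, mul_comm]
  have h0 : ∑ i ∈ Finset.range (m + 1), D ((a i : PowerSeries F) * P ^ p ^ i) = 0 := by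
    rw [← map_sum, hrel, map_zero]
  rw [Finset.sum_congr rfl hterm, Finset.sum_add_distrib, Finset.sum_ite_eq'
    (Finset.range (m + 1)) 0 (fun _ => (a 0 : PowerSeries F) * D P),
    if_pos (Finset.mem_range.mpr (Nat.succ_pos m))] at h0
  have hkey : (a 0 : PowerSeries F) * D P
      = -∑ i ∈ Finset.range (m + 1),
          ((Polynomial.derivative (a i) : Polynomial F) : PowerSeries F) * P ^ p ^ i :=
    eq_neg_of_add_eq_zero_right h0
  -- move to Laurent series
  set φ := (psToLaurent (F := F)) with hφ
  have hφinj : Function.Injective φ := psToLaurent_injective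
  set x := φ P with hx
  set y := φ (D P) with hy
  have hK : IsAlgebraic (RatFunc F) x :=
    (IsFractionRing.isAlgebraic_iff (Polynomial F) (RatFunc F) (LaurentSeries F)).mp
      ((isAlgebraic_algHom_iff φ hφinj).mpr hP)
  have happ : algebraMap (Polynomial F) (LaurentSeries F) (a 0) * y
      = -∑ i ∈ Finset.range (m + 1),
          algebraMap (Polynomial F) (LaurentSeries F) (Polynomial.derivative (a i))
            * x ^ p ^ i := by
    have := congrArg φ hkey
    rw [map_mul, map_neg, map_sum] at this
    rw [Finset.sum_congr rfl fun i _ => by rw [map_mul, map_pow, psToLaurent_coe], psToLaurent_coe] at this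
    exact this
  set u := algebraMap (Polynomial F) (RatFunc F) (a 0) with hu
  have hαu : algebraMap (Polynomial F) (LaurentSeries F) (a 0)
      = algebraMap (RatFunc F) (LaurentSeries F) u := by
    rw [hu, ← IsScalarTower.algebraMap_apply]
  have hune : u ≠ 0 := by
    rw [hu]
    simpa using ha0
  have hαne : algebraMap (RatFunc F) (LaurentSeries F) u ≠ 0 := by
    simpa using hune
  have hyval : y = algebraMap (RatFunc F) (LaurentSeries F) u⁻¹
      * (-∑ i ∈ Finset.range (m + 1),
          algebraMap (Polynomial F) (LaurentSeries F) (Polynomial.derivative (a i))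
            * x ^ p ^ i) := by
    rw [← happ, hαu, map_inv₀, inv_mul_cancel_left₀ hαne]
  have hmem : y ∈ integralClosure (RatFunc F) (LaurentSeries F) := by
    rw [hyval]
    refine mul_mem (Subalgebra.algebraMap_mem _ _) (neg_mem (Subalgebra.sum_mem _ ?_))
    intro i _
    refine mul_mem ?_ (pow_mem ?_ _)
    · rw [IsScalarTower.algebraMap_apply (Polynomial F) (RatFunc F) (LaurentSeries F)]
      exact Subalgebra.algebraMap_mem _ _
    · exact hK.isIntegral
  have hyK : IsAlgebraic (RatFunc F) y := (IsIntegral.isAlgebraic hmem)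
  have hyPoly : IsAlgebraic (Polynomial F) y :=
    (IsFractionRing.isAlgebraic_iff (Polynomial F) (RatFunc F) (LaurentSeries F)).mpr hyK
  exact (isAlgebraic_algHom_iff φ hφinj).mp hyPoly
end

section
/- Let F be a finite field of characteristic p and let P ∈ F[[X]] be algebraic over F[X]. Then there exists a finite-dimensional F-linear subspace V of F[[X]] such that P ∈ V and V is stable under all weeding operators: for every 0 ≤ r < p and every Q ∈ V, the series Λ_r Q (whose n-th coefficient is coeff (p·n + r) Q) lies in V. -/
set_option linter.unusedSectionVars false
set_option maxHeartbeats 1000000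

open PowerSeries

namespace ChristolAux

variable (p : ℕ) [Fact p.Prime] (F : Type*) [Field F] [Fintype F] [CharP F p]

theorem C_inj : Function.Injective (PowerSeries.C (R := F)) := fun a b h => by
  simpa using congrArg (PowerSeries.constantCoeff (R := F)) h

instance : CharP (PowerSeries F) p := charP_of_injective_ringHom (C_inj F) p

/-- The weeding operator as a linear map. -/
noncomputable def lamL (r : ℕ) : PowerSeries F →ₗ[F] PowerSeries F where
  toFun Q := PowerSeries.mk fun n => PowerSeries.coeff (p * n + r) Q
  map_add' x y := by ext n; simp
  map_smul' c x := by ext n; simp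

@[simp] theorem coeff_lamL (r n : ℕ) (Q : PowerSeries F) :
    PowerSeries.coeff n (lamL p F r Q) = PowerSeries.coeff (p * n + r) Q := by
  simp [lamL]

theorem psmap_map (σ τ : F →+* F) (g : PowerSeries F) :
    PowerSeries.map σ (PowerSeries.map τ g) = PowerSeries.map (σ.comp τ) g := by
  ext n; simp

theorem map_coe (σ : F →+* F) (B : Polynomial F) :
    ((B.map σ : Polynomial F) : PowerSeries F) = PowerSeries.map σ (B : PowerSeries F) := by
  ext n; simp [Polynomial.coeff_coe]

theorem monomial_smul_helper (j : ℕ) (a : F) :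
    PowerSeries.monomial (R := F) j a = a • (PowerSeries.X : PowerSeries F) ^ j := by
  ext n
  simp [PowerSeries.coeff_monomial, PowerSeries.coeff_X_pow, PowerSeries.coeff_smul,
    eq_comm, mul_ite]

theorem poly_coeff_pow_p (B : Polynomial F) (m : ℕ) :
    (B ^ p).coeff m = if p ∣ m then (B.coeff (m / p)) ^ p else 0 := by
  have h := Polynomial.map_frobenius_expand p B
  have h2 : (B ^ p).coeff m = ((Polynomial.expand F p B).map (frobenius F p)).coeff m := by
    rw [h]
  rw [h2, Polynomial.coeff_map, Polynomial.coeff_expand (Fact.out : p.Prime).pos,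
    apply_ite (frobenius F p)]
  simp [frobenius_def, zero_pow (Fact.out : p.Prime).ne_zero]

/-- coefficients of `p`-th powers of power series. -/
theorem coeff_pow_p (h : PowerSeries F) (m : ℕ) :
    PowerSeries.coeff m (h ^ p) = if p ∣ m then (PowerSeries.coeff (m / p) h) ^ p else 0 := by
  classical
  set B : Polynomial F := h.trunc (m + 1) with hB
  have hdvd : (PowerSeries.X : PowerSeries F) ^ (m + 1) ∣ h - (B : PowerSeries F) := by
    rw [PowerSeries.X_pow_dvd_iff]
    intro k hk
    simp [hB, PowerSeries.coeff_trunc, hk, Polynomial.coeff_coe]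
  have hdvd2 : (PowerSeries.X : PowerSeries F) ^ (m + 1) ∣ h ^ p - (B : PowerSeries F) ^ p :=
    hdvd.trans (sub_dvd_pow_sub_pow _ _ p)
  rw [PowerSeries.X_pow_dvd_iff] at hdvd2
  have hm : PowerSeries.coeff m (h ^ p) = PowerSeries.coeff m ((B : PowerSeries F) ^ p) := by
    have h3 := hdvd2 m (Nat.lt_succ_self m)
    rw [map_sub, sub_eq_zero] at h3
    exact h3
  rw [hm, ← Polynomial.coe_pow, Polynomial.coeff_coe, poly_coeff_pow_p]
  have hcf : B.coeff (m / p) = PowerSeries.coeff (m / p) h := by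
    simp [hB, PowerSeries.coeff_trunc, Nat.lt_succ_of_le (Nat.div_le_self m p)]
  rw [hcf]

theorem filter_dvd_range (n r : ℕ) (hr : r < p) :
    (Finset.range (p * n + r + 1)).filter (p ∣ ·) = (Finset.range (n + 1)).image (p * ·) := by
  have hp : 0 < p := (Fact.out : p.Prime).pos
  ext b
  simp only [Finset.mem_filter, Finset.mem_range, Finset.mem_image]
  constructor
  · rintro ⟨hb, d, rfl⟩
    refine ⟨d, ?_, rfl⟩
    by_contra hd
    push_neg at hd
    have h1 : p * (n + 1) ≤ p * d := Nat.mul_le_mul_left p hd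
    have h2 : p * (n + 1) = p * n + p := by ring
    linarith
  · rintro ⟨d, hd, rfl⟩
    refine ⟨?_, ⟨d, rfl⟩⟩
    have h1 : p * d ≤ p * n := Nat.mul_le_mul_left p (Nat.lt_succ_iff.mp hd)
    linarith

/-- The key semilinear identity : `Λ_r (g ⬝ h^p) = Λ_r g ⬝ Φ(h)`. -/
theorem lam_mul_pow {r : ℕ} (hr : r < p) (g h : PowerSeries F) :
    lamL p F r (g * h ^ p) = lamL p F r g * PowerSeries.map (frobenius F p) h := by
  have hp : 0 < p := (Fact.out : p.Prime).pos
  ext n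
  rw [coeff_lamL, mul_comm g (h ^ p), PowerSeries.coeff_mul,
    Finset.Nat.sum_antidiagonal_eq_sum_range_succ_mk,
    mul_comm (lamL p F r g), PowerSeries.coeff_mul,
    Finset.Nat.sum_antidiagonal_eq_sum_range_succ_mk]
  have hL : ∀ k, PowerSeries.coeff k (h ^ p) * PowerSeries.coeff (p * n + r - k) g
      = if p ∣ k then (PowerSeries.coeff (k / p) h) ^ p * PowerSeries.coeff (p * n + r - k) g
        else 0 := by
    intro k; rw [coeff_pow_p, ite_mul, zero_mul]
  simp_rw [hL]
  rw [← Finset.sum_filter, filter_dvd_range p n r hr, Finset.sum_image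
    (fun a _ b _ hab => Nat.eq_of_mul_eq_mul_left hp hab)]
  refine Finset.sum_congr rfl fun d hd => ?_
  have hdn : d ≤ n := Nat.lt_succ_iff.mp (Finset.mem_range.mp hd)
  have e1 : p * d / p = d := Nat.mul_div_cancel_left d hp
  have e2 : p * n + r - p * d = p * (n - d) + r := by
    have h3 : p * d + p * (n - d) = p * n := by
      rw [← Nat.mul_add, Nat.add_sub_cancel' hdn]
    omega
  rw [e1, e2, PowerSeries.coeff_map, coeff_lamL, frobenius_def]

theorem lamL_one_zero : lamL p F 0 1 = 1 := by
  have hp : 0 < p := (Fact.out : p.Prime).pos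
  ext n
  rw [coeff_lamL]
  rcases Nat.eq_zero_or_pos n with rfl | hn
  · simp
  · rw [PowerSeries.coeff_one, PowerSeries.coeff_one, if_neg (by positivity),
      if_neg (by omega)]

theorem lam_pow_p (h : PowerSeries F) :
    lamL p F 0 (h ^ p) = PowerSeries.map (frobenius F p) h := by
  have := lam_mul_pow p F (r := 0) (Fact.out : p.Prime).pos 1 h
  rwa [one_mul, lamL_one_zero, one_mul] at this

theorem lam_coe (r N : ℕ) (B : Polynomial F) (hB : B.natDegree < p * (N + 1)) :
    ∃ B' : Polynomial F, ((B' : PowerSeries F) = lamL p F r (B : PowerSeries F)) ∧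
      B'.natDegree ≤ N := by
  have hp : 0 < p := (Fact.out : p.Prime).pos
  refine ⟨∑ j ∈ Finset.range (N + 1), Polynomial.monomial j (B.coeff (p * j + r)), ?_, ?_⟩
  · ext n
    rw [Polynomial.coeff_coe, coeff_lamL, Polynomial.coeff_coe, Polynomial.finset_sum_coeff]
    simp_rw [Polynomial.coeff_monomial]
    rw [Finset.sum_ite_eq' (Finset.range (N + 1)) n (fun j => B.coeff (p * j + r))]
    by_cases hn : n ∈ Finset.range (N + 1)
    · rw [if_pos hn]
    · rw [if_neg hn]
      have hnN : N + 1 ≤ n := by simpa [Finset.mem_range, not_lt] using hn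
      refine (Polynomial.coeff_eq_zero_of_natDegree_lt ?_).symm
      calc B.natDegree < p * (N + 1) := hB
        _ ≤ p * n := Nat.mul_le_mul_left p hnN
        _ ≤ p * n + r := Nat.le_add_right _ _
  · exact Polynomial.natDegree_sum_le_of_forall_le _ _ fun j hj =>
      le_trans (Polynomial.natDegree_monomial_le _) (Nat.lt_succ_iff.mp (Finset.mem_range.mp hj))

/-- The main construction: from an Ore-type relation, a finite-dimensional stable space. -/
theorem main (f : PowerSeries F) (s : ℕ) (hs : 1 ≤ s) (hcard : Fintype.card F = p ^ s)
    (D : Polynomial F) (hD : D ≠ 0) (t : ℕ) (ht : 1 ≤ t) (Cc : ℕ → Polynomial F)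
    (rel : (D : PowerSeries F) * f =
      ∑ i ∈ Finset.range t, ((Cc i : PowerSeries F) * f ^ p ^ (i + 1))) :
    ∃ V : Submodule F (PowerSeries F), FiniteDimensional F V ∧ f ∈ V ∧
      ∀ r : ℕ, r < p → ∀ Q ∈ V, lamL p F r Q ∈ V := by
  classical
  have hp2 : 2 ≤ p := (Fact.out : p.Prime).two_le
  have hp : 0 < p := by omega
  set σ : ℕ → (F →+* F) := fun k => iterateFrobenius F p k with hσ
  set fk : ℕ → PowerSeries F := fun k => PowerSeries.map (σ k) f with hfk
  set Dk : ℕ → Polynomial F := fun k => D.map (σ k) with hDk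
  set Ck : ℕ → ℕ → Polynomial F := fun i k => (Cc i).map (σ k) with hCk
  have hσ0 : σ 0 = RingHom.id F := iterateFrobenius_zero F p
  have hσsucc : ∀ k, (frobenius F p).comp (σ k) = σ (k + 1) := by
    intro k; ext x
    simp only [hσ, RingHom.comp_apply, iterateFrobenius_def, frobenius_def, ← pow_mul]
    rw [← pow_succ]
  have hσs : σ s = RingHom.id F := by
    ext x; simp [hσ, iterateFrobenius_def, ← hcard, FiniteField.pow_card]
  have hfk0 : fk 0 = f := by simp [hfk, hσ0, PowerSeries.map_id]
  have hfks : fk s = f := by simp [hfk, hσs, PowerSeries.map_id]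
  have hPhif : ∀ k, PowerSeries.map (frobenius F p) (fk k) = fk (k + 1) := by
    intro k
    simp only [hfk]
    rw [psmap_map, hσsucc]
  have hrelk : ∀ k, ((Dk k : Polynomial F) : PowerSeries F) * fk k
      = ∑ i ∈ Finset.range t, ((Ck i k : PowerSeries F) * fk k ^ p ^ (i + 1)) := by
    intro k
    have h1 := congrArg (PowerSeries.map (σ k)) rel
    rw [map_mul, map_sum] at h1
    simp only [map_mul, map_pow, ← map_coe] at h1
    simpa only [hfk, hDk, hCk] using h1
  set E : Polynomial F := ∏ k ∈ Finset.range s, Dk k with hE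
  have hDk0 : ∀ k, Dk k ≠ 0 := fun k => by
    simp only [hDk]
    exact (Polynomial.map_ne_zero_iff (σ k).injective).mpr hD
  have hE0 : E ≠ 0 := Finset.prod_ne_zero_iff.mpr fun k _ => hDk0 k
  have hE0' : ((E : Polynomial F) : PowerSeries F) ≠ 0 := by
    simpa [Polynomial.coe_eq_zero_iff] using hE0
  set dC : ℕ := (Finset.range t).sup fun i => (Cc i).natDegree with hdC
  set N : ℕ := s * D.natDegree + dC with hN
  have hDkdeg : ∀ k, (Dk k).natDegree ≤ D.natDegree := fun k => Polynomial.natDegree_map_le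
  have hEdeg : E.natDegree ≤ s * D.natDegree := by
    refine le_trans (Polynomial.natDegree_prod_le _ _) ?_
    refine le_trans (Finset.sum_le_card_nsmul _ _ D.natDegree fun k _ => hDkdeg k) ?_
    simp [Finset.card_range]
  have hCkdeg : ∀ i k, i < t → (Ck i k).natDegree ≤ dC := fun i k hi =>
    le_trans Polynomial.natDegree_map_le (Finset.le_sup (f := fun i => (Cc i).natDegree) (Finset.mem_range.mpr hi))
  clear_value dC N
  set gen : Fin (N + 1) × Fin t × Fin s → PowerSeries F :=
    fun x => PowerSeries.X ^ (x.1 : ℕ) * fk (x.2.2 : ℕ) ^ p ^ (x.2.1 : ℕ) with hgen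
  set S : Submodule F (PowerSeries F) := Submodule.span F (Set.range gen) with hS
  have hSfd : FiniteDimensional F S := FiniteDimensional.span_of_finite F (Set.finite_range gen)
  set mulE : PowerSeries F →ₗ[F] PowerSeries F :=
    LinearMap.mulLeft F ((E : Polynomial F) : PowerSeries F) with hmulE
  have memS : ∀ B : Polynomial F, B.natDegree ≤ N → ∀ i k : ℕ, i < t → k < s →
      (B : PowerSeries F) * fk k ^ p ^ i ∈ S := by
    intro B hB i k hi hk
    have hrepr : (B : PowerSeries F) * fk k ^ p ^ i
        = ∑ j ∈ Finset.range (N + 1), B.coeff j • (PowerSeries.X ^ j * fk k ^ p ^ i) := by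
      conv_lhs => rw [Polynomial.as_sum_range' B (N + 1) (Nat.lt_succ_of_le hB)]
      rw [← Polynomial.coeToPowerSeries.ringHom_apply, map_sum, Finset.sum_mul]
      refine Finset.sum_congr rfl fun j hj => ?_
      rw [Polynomial.coeToPowerSeries.ringHom_apply, Polynomial.coe_monomial,
        monomial_smul_helper, smul_mul_assoc]
    rw [hrepr]
    exact Submodule.sum_mem _ fun j hj => Submodule.smul_mem _ _
      (Submodule.subset_span ⟨(⟨j, Finset.mem_range.mp hj⟩, ⟨i, hi⟩, ⟨k, hk⟩), rfl⟩)
  have fk_wrap : ∀ k : ℕ, k < s → ∃ k' : ℕ, k' < s ∧ fk (k + 1) = fk k' := by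
    intro k hk
    rcases eq_or_lt_of_le (Nat.succ_le_of_lt hk) with heq | hlt
    · exact ⟨0, by omega, by rw [show k + 1 = s from heq, hfks, hfk0]⟩
    · exact ⟨k + 1, hlt, rfl⟩
  have hEk : ∀ k, k < s → ∃ Ek : Polynomial F, Ek.natDegree ≤ s * D.natDegree ∧
      E = Dk k * Ek := by
    intro k hk
    refine ⟨∏ k' ∈ (Finset.range s).erase k, Dk k', ?_,
      (Finset.mul_prod_erase _ _ (Finset.mem_range.mpr hk)).symm⟩
    refine le_trans (Polynomial.natDegree_prod_le _ _) ?_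
    refine le_trans (Finset.sum_le_card_nsmul _ _ D.natDegree fun k' _ => hDkdeg k') ?_
    have hcle : ((Finset.range s).erase k).card ≤ s :=
      le_trans Finset.card_erase_le (by simp)
    simpa [smul_eq_mul] using Nat.mul_le_mul_right D.natDegree hcle
  have Tx : ∀ j i k : ℕ, j ≤ N → i < t → k < s →
      ∃ W : ℕ → Polynomial F, (∀ i' < t, (W i').natDegree < p * (N + 1)) ∧
        ((E : Polynomial F) : PowerSeries F) ^ (p - 1) * (PowerSeries.X ^ j * fk k ^ p ^ i)
          = ∑ i' ∈ Finset.range t,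
              ((W i' : Polynomial F) : PowerSeries F) * (fk k ^ p ^ i') ^ p := by
    intro j i k hj hi hk
    have hdegE2 : (E ^ (p - 2)).natDegree ≤ (p - 2) * (s * D.natDegree) :=
      le_trans (Polynomial.natDegree_pow_le) (Nat.mul_le_mul_left _ hEdeg)
    have hdegE1 : (E ^ (p - 1)).natDegree ≤ (p - 1) * (s * D.natDegree) :=
      le_trans (Polynomial.natDegree_pow_le) (Nat.mul_le_mul_left _ hEdeg)
    have e2 : p * (N + 1) = p * (s * D.natDegree) + p * dC + p := by rw [hN]; ring
    have e3 : 2 * dC ≤ p * dC := Nat.mul_le_mul_right dC hp2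
    have e4 : N = s * D.natDegree + dC := hN
    have e1 : (p - 2) * (s * D.natDegree) + 2 * (s * D.natDegree) = p * (s * D.natDegree) := by
      have h4 : p - 2 + 2 = p := by omega
      calc (p - 2) * (s * D.natDegree) + 2 * (s * D.natDegree)
          = (p - 2 + 2) * (s * D.natDegree) := by ring
        _ = p * (s * D.natDegree) := by rw [h4]
    have e1' : (p - 1) * (s * D.natDegree) + 1 * (s * D.natDegree) = p * (s * D.natDegree) := by
      have h4 : p - 1 + 1 = p := by omega
      calc (p - 1) * (s * D.natDegree) + 1 * (s * D.natDegree)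
          = (p - 1 + 1) * (s * D.natDegree) := by ring
        _ = p * (s * D.natDegree) := by rw [h4]
    rcases Nat.eq_zero_or_pos i with rfl | hipos
    · obtain ⟨Ek, hEkdeg, hEkeq⟩ := hEk k hk
      refine ⟨fun i' => E ^ (p - 2) * Polynomial.X ^ j * Ek * Ck i' k, ?_, ?_⟩
      · intro i' hi'
        show (E ^ (p - 2) * Polynomial.X ^ j * Ek * Ck i' k).natDegree < p * (N + 1)
        have hb : (E ^ (p - 2) * Polynomial.X ^ j * Ek * Ck i' k).natDegree
            ≤ (p - 2) * (s * D.natDegree) + j + Ek.natDegree + (Ck i' k).natDegree := by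
          refine le_trans (Polynomial.natDegree_mul_le) (add_le_add ?_ le_rfl)
          refine le_trans (Polynomial.natDegree_mul_le) (add_le_add ?_ le_rfl)
          refine le_trans (Polynomial.natDegree_mul_le) (add_le_add hdegE2 ?_)
          simp [Polynomial.natDegree_X_pow]
        have hck := hCkdeg i' k hi'
        linarith [hb, hEkdeg, hck, hj, e1, e2, e3, e4, hp]
      · have hEsplit : ((E : Polynomial F) : PowerSeries F)
            = ((Dk k : Polynomial F) : PowerSeries F) * ((Ek : Polynomial F) : PowerSeries F) := by
          rw [hEkeq, Polynomial.coe_mul]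
        have hpow : ((E : Polynomial F) : PowerSeries F) ^ (p - 1)
            = ((E : Polynomial F) : PowerSeries F) ^ (p - 2)
              * ((E : Polynomial F) : PowerSeries F) := by
          rw [← pow_succ]
          congr 1
          omega
        calc ((E : Polynomial F) : PowerSeries F) ^ (p - 1)
              * (PowerSeries.X ^ j * fk k ^ p ^ 0)
            = ((E : Polynomial F) : PowerSeries F) ^ (p - 2) * PowerSeries.X ^ j
              * ((Ek : Polynomial F) : PowerSeries F)
              * (((Dk k : Polynomial F) : PowerSeries F) * fk k) := by
              rw [hpow]
              nth_rewrite 2 [hEsplit]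
              rw [pow_zero, pow_one]
              ring
          _ = ((E : Polynomial F) : PowerSeries F) ^ (p - 2) * PowerSeries.X ^ j
              * ((Ek : Polynomial F) : PowerSeries F)
              * ∑ i' ∈ Finset.range t, ((Ck i' k : Polynomial F) : PowerSeries F)
                  * fk k ^ p ^ (i' + 1) := by rw [hrelk k]
          _ = ∑ i' ∈ Finset.range t,
                ((E ^ (p - 2) * Polynomial.X ^ j * Ek * Ck i' k : Polynomial F) : PowerSeries F)
                  * (fk k ^ p ^ i') ^ p := by
              rw [Finset.mul_sum]
              refine Finset.sum_congr rfl fun i' _ => ?_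
              have hfp : (fk k ^ p ^ i') ^ p = fk k ^ p ^ (i' + 1) := by
                rw [← pow_mul, ← pow_succ]
              rw [hfp]
              push_cast [Polynomial.coe_mul, Polynomial.coe_pow, Polynomial.coe_X]
              ring
    · refine ⟨fun i' => if i' = i - 1 then E ^ (p - 1) * Polynomial.X ^ j else 0, ?_, ?_⟩
      · intro i' hi'
        show (if i' = i - 1 then E ^ (p - 1) * Polynomial.X ^ j else 0).natDegree < p * (N + 1)
        have hppos : 0 < p * (N + 1) := by positivity
        split
        · have hb : (E ^ (p - 1) * Polynomial.X ^ j).natDegree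
              ≤ (p - 1) * (s * D.natDegree) + j := by
            refine le_trans (Polynomial.natDegree_mul_le) (add_le_add hdegE1 ?_)
            simp [Polynomial.natDegree_X_pow]
          linarith [hb, hj, e1', e2, e3, e4, hp]
        · simpa using hppos
      · have hcol : ∑ i' ∈ Finset.range t,
            (((if i' = i - 1 then E ^ (p - 1) * Polynomial.X ^ j else 0)
              : Polynomial F) : PowerSeries F) * (fk k ^ p ^ i') ^ p
            = ((E ^ (p - 1) * Polynomial.X ^ j : Polynomial F) : PowerSeries F)
                * (fk k ^ p ^ (i - 1)) ^ p := by
          rw [Finset.sum_eq_single (i - 1)]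
          · rw [if_pos rfl]
          · intro b _ hb
            rw [if_neg hb, Polynomial.coe_zero, zero_mul]
          · intro hmem
            exact absurd (Finset.mem_range.mpr (by omega)) hmem
        rw [hcol]
        have hfp : (fk k ^ p ^ (i - 1)) ^ p = fk k ^ p ^ i := by
          rw [← pow_mul, ← pow_succ]
          congr 2
          omega
        rw [hfp]
        push_cast [Polynomial.coe_mul, Polynomial.coe_pow, Polynomial.coe_X]
        ring
  -- the space
  refine ⟨S.comap mulE, ?_, ?_, ?_⟩
  · let L : (S.comap mulE) →ₗ[F] S := mulE.restrict fun x hx => hx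
    have hinj : Function.Injective L := by
      intro a b hab
      have h1 : ((E : Polynomial F) : PowerSeries F) * (a : PowerSeries F)
          = ((E : Polynomial F) : PowerSeries F) * (b : PowerSeries F) :=
        congrArg Subtype.val hab
      exact Subtype.ext (mul_left_cancel₀ hE0' h1)
    exact FiniteDimensional.of_injective L hinj
  · show mulE f ∈ S
    have h1 : mulE f = ((E : Polynomial F) : PowerSeries F) * fk 0 ^ p ^ 0 := by
      simp [hmulE, LinearMap.mulLeft_apply, hfk0]
    rw [h1]
    exact memS E (le_trans hEdeg (by rw [hN]; exact Nat.le_add_right _ _)) 0 0 ht hs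
  · intro r hr Q hQ
    show mulE (lamL p F r Q) ∈ S
    have hQ' : ∃ c : Fin (N + 1) × Fin t × Fin s → F, ∑ x, c x • gen x
        = ((E : Polynomial F) : PowerSeries F) * Q := by
      rw [← Submodule.mem_span_range_iff_exists_fun]
      exact hQ
    obtain ⟨c, hc⟩ := hQ'
    have hEpQ : ((E : Polynomial F) : PowerSeries F) ^ p * Q
        = ∑ x, c x • (((E : Polynomial F) : PowerSeries F) ^ (p - 1) * gen x) := by
      have h1 : ((E : Polynomial F) : PowerSeries F) ^ p
          = ((E : Polynomial F) : PowerSeries F) ^ (p - 1)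
            * ((E : Polynomial F) : PowerSeries F) := by
        rw [← pow_succ]
        congr 1
        omega
      rw [h1, mul_assoc, ← hc, Finset.mul_sum]
      exact Finset.sum_congr rfl fun x _ => by rw [mul_smul_comm]
    choose W hWdeg hWeq using fun x : Fin (N + 1) × Fin t × Fin s =>
      Tx (x.1 : ℕ) (x.2.1 : ℕ) (x.2.2 : ℕ) (Nat.lt_succ_iff.mp x.1.isLt) x.2.1.isLt x.2.2.isLt
    have hEmap : E.map (frobenius F p) = E := by
      have h1 : E.map (frobenius F p) = ∏ k ∈ Finset.range s, Dk (k + 1) := by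
        rw [hE, Polynomial.map_prod]
        refine Finset.prod_congr rfl fun k _ => ?_
        simp only [hDk]
        rw [Polynomial.map_map, hσsucc]
      have hDks : Dk s = Dk 0 := by
        simp only [hDk]
        rw [hσs, hσ0]
      have h2 : (∏ k ∈ Finset.range s, Dk (k + 1)) * Dk 0
          = (∏ k ∈ Finset.range s, Dk k) * Dk 0 := by
        rw [← Finset.prod_range_succ' Dk s, Finset.prod_range_succ, hDks]
      exact mul_right_cancel₀ (hDk0 0) (h1 ▸ h2)
    have hPhiE : PowerSeries.map (frobenius F p) ((E : Polynomial F) : PowerSeries F)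
        = ((E : Polynomial F) : PowerSeries F) := by
      rw [← map_coe, hEmap]
    have hlam : lamL p F r (((E : Polynomial F) : PowerSeries F) ^ p * Q)
        = lamL p F r Q * ((E : Polynomial F) : PowerSeries F) := by
      rw [mul_comm, lam_mul_pow p F hr, hPhiE]
    have hmain : lamL p F r Q * ((E : Polynomial F) : PowerSeries F)
        = ∑ x, c x • ∑ i' ∈ Finset.range t,
            lamL p F r ((W x i' : Polynomial F) : PowerSeries F)
              * PowerSeries.map (frobenius F p) (fk (x.2.2 : ℕ) ^ p ^ i') := by
      rw [← hlam, hEpQ, map_sum]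
      refine Finset.sum_congr rfl fun x _ => ?_
      rw [LinearMap.map_smul]
      congr 1
      rw [hWeq x, map_sum]
      exact Finset.sum_congr rfl fun i' _ => lam_mul_pow p F hr _ _
    have hgoal : mulE (lamL p F r Q) = lamL p F r Q * ((E : Polynomial F) : PowerSeries F) :=
      mul_comm _ _
    rw [hgoal, hmain]
    refine Submodule.sum_mem _ fun x _ => Submodule.smul_mem _ _
      (Submodule.sum_mem _ fun i' hi' => ?_)
    obtain ⟨B', hB'eq, hB'deg⟩ := lam_coe p F r N (W x i')
      (hWdeg x i' (Finset.mem_range.mp hi'))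
    obtain ⟨k', hk', hfkk'⟩ := fk_wrap (x.2.2 : ℕ) x.2.2.isLt
    rw [map_pow, hPhif, hfkk', ← hB'eq]
    exact memS B' hB'deg i' k' (Finset.mem_range.mp hi') hk'


end ChristolAux

open ChristolAux in
/-- If `P ∈ F⟦X⟧` is algebraic over `F[X]` (`F` a finite field of characteristic `p`),
then there is a finite-dimensional `F`-subspace of `F⟦X⟧` containing `P` and stable
under all weeding operators `Λ_r`, `0 ≤ r < p`. -/
theorem exists_finiteDimensional_weeding_stable (p : ℕ) [Fact p.Prime] (F : Type*)
    [Field F] [Fintype F] [CharP F p] (P : PowerSeries F)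
    (hP : IsAlgebraic (Polynomial F) P) :
    ∃ V : Submodule F (PowerSeries F), FiniteDimensional F V ∧ P ∈ V ∧
      ∀ r : ℕ, r < p → ∀ Q ∈ V,
        (PowerSeries.mk fun n => PowerSeries.coeff (p * n + r) Q) ∈ V := by
  classical
  have hp : 0 < p := (Fact.out : p.Prime).pos
  obtain ⟨np, hpp, hcardnp⟩ := FiniteField.card F p
  set s : ℕ := (np : ℕ) with hsdef
  have hs : 1 ≤ s := np.2
  have hcard' : Fintype.card F = p ^ s := hcardnp
  have hAM : ∀ B : Polynomial F,
      algebraMap (Polynomial F) (PowerSeries F) B = (B : PowerSeries F) := by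
    intro B
    rw [PowerSeries.algebraMap_apply']
    simp
  have hinj : ∀ x : Polynomial F, algebraMap (Polynomial F) (PowerSeries F) x = 0 → x = 0 := by
    intro x hx
    rw [hAM] at hx
    exact_mod_cast hx
  obtain ⟨y, hy, hyint⟩ := hP.exists_integral_multiple
  set g : PowerSeries F := algebraMap (Polynomial F) (PowerSeries F) y * P with hg
  have hgint : IsIntegral (Polynomial F) g := by
    rwa [Algebra.smul_def] at hyint
  have hfg := hgint.fg_adjoin_singleton
  haveI := isNoetherian_of_fg_of_noetherian _ hfg
  have hmem : ∀ i : ℕ, g ^ p ^ i ∈ (Algebra.adjoin (Polynomial F) {g}).toSubmodule := fun i =>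
    Subalgebra.pow_mem _ (Algebra.self_mem_adjoin_singleton _ g) _
  set v : ℕ → (Algebra.adjoin (Polynomial F) {g}).toSubmodule := fun i => ⟨g ^ p ^ i, hmem i⟩
    with hv
  have hnli : ¬ LinearIndependent (Polynomial F) v := by
    intro h
    haveI := h.finite_of_isNoetherian
    exact not_finite ℕ
  rw [linearIndependent_iff] at hnli
  push_neg at hnli
  obtain ⟨l, hl0, hlne⟩ := hnli
  have hsum : ∑ i ∈ l.support, (l i) • (g ^ p ^ i) = 0 := by
    have h0 := congrArg (Subtype.val) hl0
    rw [Finsupp.linearCombination_apply, Finsupp.sum] at h0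
    simpa [hv] using h0
  set B : ℕ → Polynomial F := fun i => if i ∈ l.support then l i * y ^ p ^ i else 0 with hB
  have hrel : ∑ i ∈ l.support, ((B i : Polynomial F) : PowerSeries F) * P ^ p ^ i = 0 := by
    have heach : ∀ i ∈ l.support, ((B i : Polynomial F) : PowerSeries F) * P ^ p ^ i
        = (l i) • (g ^ p ^ i) := by
      intro i hi
      rw [hB]
      simp only [if_pos hi]
      rw [Algebra.smul_def, hg, mul_pow, ← mul_assoc, ← map_pow, ← map_mul, hAM]
    rw [Finset.sum_congr rfl heach, hsum]
  have hBne : ∀ i ∈ l.support, B i ≠ 0 := by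
    intro i hi
    rw [hB]
    simp only [if_pos hi]
    exact mul_ne_zero (Finsupp.mem_support_iff.mp hi) (pow_ne_zero _ hy)
  have hBout : ∀ i, i ∉ l.support → B i = 0 := by
    intro i hi
    rw [hB]
    simp [hi]
  have hne : l.support.Nonempty := Finsupp.support_nonempty_iff.mpr hlne
  set i0 := l.support.min' hne with hi0
  set imax := l.support.max' hne with himax
  have hi0imax : i0 ≤ imax := l.support.min'_le _ (l.support.max'_mem hne)
  set M := s * i0 with hM
  have hi0M : i0 ≤ M := by
    rw [hM]
    calc i0 = 1 * i0 := (one_mul i0).symm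
      _ ≤ s * i0 := Nat.mul_le_mul_right i0 hs
  set m' := M - i0 with hm'
  have hpm' : p ^ m' ≠ 0 := by positivity
  have hi0mem : i0 ∈ l.support := by rw [hi0]; exact l.support.min'_mem hne
  have hminle : ∀ i ∈ l.support, i0 ≤ i := by
    intro i hi; rw [hi0]; exact l.support.min'_le i hi
  have hlemax : ∀ i ∈ l.support, i ≤ imax := by
    intro i hi; rw [himax]; exact l.support.le_max' i hi
  clear_value i0 imax M m'
  have hrel2 : ∑ i ∈ l.support, ((B i ^ p ^ m' : Polynomial F) : PowerSeries F)
      * P ^ p ^ (i + m') = 0 := by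
    have h1 := congrArg (fun z : PowerSeries F => z ^ p ^ m') hrel
    rw [zero_pow hpm', sum_pow_char_pow] at h1
    rw [← h1]
    refine Finset.sum_congr rfl fun i hi => ?_
    rw [mul_pow, Polynomial.coe_pow, ← pow_mul, ← pow_add]
  set u := P ^ p ^ M with hu
  set B2 : ℕ → Polynomial F := fun j => B (i0 + j) ^ p ^ m' with hB2
  set tlen := imax + 1 - i0 with htlendef
  have htlen : 1 ≤ tlen := by rw [htlendef]; omega
  have hrel3 : ∑ j ∈ Finset.range tlen, ((B2 j : Polynomial F) : PowerSeries F) * u ^ p ^ j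
      = 0 := by
    have hsub : l.support ⊆ Finset.Ico i0 (imax + 1) := fun i hi =>
      Finset.mem_Ico.mpr ⟨hminle i hi, Nat.lt_succ_of_le (hlemax i hi)⟩
    have hvan : ∀ i ∈ Finset.Ico i0 (imax + 1), i ∉ l.support →
        ((B i ^ p ^ m' : Polynomial F) : PowerSeries F) * P ^ p ^ (i + m') = 0 := by
      intro i _ hi
      rw [hBout i hi, zero_pow hpm', Polynomial.coe_zero, zero_mul]
    have h2 : ∑ i ∈ Finset.Ico i0 (imax + 1), ((B i ^ p ^ m' : Polynomial F) : PowerSeries F)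
        * P ^ p ^ (i + m') = 0 := by
      rw [← Finset.sum_subset hsub hvan]
      exact hrel2
    rw [Finset.sum_Ico_eq_sum_range] at h2
    rw [show imax + 1 - i0 = tlen from rfl] at h2
    rw [← h2]
    refine Finset.sum_congr rfl fun j _ => ?_
    rw [hB2, hu]
    simp only
    rw [← pow_mul, ← pow_add, show M + j = i0 + j + m' from by omega]
  have hB2tlen : B2 tlen = 0 := by
    rw [hB2]
    simp only
    have hnm : i0 + tlen ∉ l.support := by
      intro hmem
      have := hlemax _ hmem
      omega
    rw [hBout _ hnm, zero_pow hpm']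
  set D' := B2 0 with hD'
  have hD'0 : D' ≠ 0 := by
    rw [hD', hB2]
    simp only [add_zero]
    exact pow_ne_zero _ (hBne i0 hi0mem)
  set Cc : ℕ → Polynomial F := fun j => -(B2 (j + 1)) with hCc
  have hrel4 : ((D' : Polynomial F) : PowerSeries F) * u
      = ∑ j ∈ Finset.range tlen, ((Cc j : Polynomial F) : PowerSeries F) * u ^ p ^ (j + 1) := by
    have hsplit := Finset.sum_range_succ'
      (fun j => ((B2 j : Polynomial F) : PowerSeries F) * u ^ p ^ j) (tlen - 1)
    rw [show tlen - 1 + 1 = tlen from by omega] at hsplit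
    rw [hsplit] at hrel3
    have h5 : ((B2 0 : Polynomial F) : PowerSeries F) * u ^ p ^ 0
        = -∑ j ∈ Finset.range (tlen - 1),
            ((B2 (j + 1) : Polynomial F) : PowerSeries F) * u ^ p ^ (j + 1) :=
      eq_neg_of_add_eq_zero_right hrel3
    have h6 : ∑ j ∈ Finset.range tlen, ((Cc j : Polynomial F) : PowerSeries F) * u ^ p ^ (j + 1)
        = -∑ j ∈ Finset.range (tlen - 1),
            ((B2 (j + 1) : Polynomial F) : PowerSeries F) * u ^ p ^ (j + 1) := by
      have h7 := Finset.sum_range_succ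
        (fun j => ((Cc j : Polynomial F) : PowerSeries F) * u ^ p ^ (j + 1)) (tlen - 1)
      rw [show tlen - 1 + 1 = tlen from by omega] at h7
      rw [h7]
      have h8 : ((Cc (tlen - 1) : Polynomial F) : PowerSeries F) * u ^ p ^ tlen
          = 0 := by
        rw [hCc]
        simp only
        rw [show tlen - 1 + 1 = tlen from by omega, hB2tlen]
        simp
      rw [h8, add_zero, ← Finset.sum_neg_distrib]
      refine Finset.sum_congr rfl fun j _ => ?_
      rw [hCc]
      simp only
      push_cast [Polynomial.coe_neg]
      ring
    rw [pow_zero, pow_one] at h5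
    rw [hD', h5, h6]
  obtain ⟨V, hVfd, huV, hVstab⟩ := main p F u s hs hcard' D' hD'0 tlen htlen Cc hrel4
  refine ⟨V, hVfd, ?_, ?_⟩
  · have hcomp : ∀ k : ℕ, (frobenius F p).comp (iterateFrobenius F p k)
        = iterateFrobenius F p (k + 1) := by
      intro k
      ext z
      simp only [RingHom.comp_apply, iterateFrobenius_def, frobenius_def, ← pow_mul]
      rw [← pow_succ]
    have hclaim : ∀ jj : ℕ, jj ≤ M →
        (PowerSeries.map (iterateFrobenius F p jj) P) ^ p ^ (M - jj) ∈ V := by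
      intro jj
      induction jj with
      | zero =>
        intro _
        have h1 : PowerSeries.map (iterateFrobenius F p 0) P = P := by
          rw [iterateFrobenius_zero, PowerSeries.map_id]
          rfl
        rw [h1, Nat.sub_zero]
        exact huV
      | succ jj ih =>
        intro hjj
        have h1 := hVstab 0 hp _ (ih (by omega))
        have h2 : lamL p F 0 ((PowerSeries.map (iterateFrobenius F p jj) P) ^ p ^ (M - jj))
            = (PowerSeries.map (iterateFrobenius F p (jj + 1)) P) ^ p ^ (M - (jj + 1)) := by
          have e : M - jj = (M - (jj + 1)) + 1 := by omega
          rw [e, pow_succ, pow_mul, lam_pow_p, ← map_pow, psmap_map, hcomp, map_pow]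
        rw [h2] at h1
        exact h1
    have hfin := hclaim M le_rfl
    rw [Nat.sub_self, pow_zero, pow_one] at hfin
    have hId : PowerSeries.map (iterateFrobenius F p M) P = P := by
      ext n
      rw [PowerSeries.coeff_map, iterateFrobenius_def, hM, pow_mul, ← hcard']
      exact FiniteField.pow_card_pow _ _
    rwa [hId] at hfin
  · intro r hr Q hQ
    exact hVstab r hr Q hQ
end
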